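/- Let p₁ > 0, ω > 0, set η = η† = (1/p₁²)·(1 + √(1 + 4·p₁²/ω²)) and δ† = (√(ω² + 4·p₁²) − ω)/(2·ω), and suppose 0 < δ ≤ δ†. Let q(t) = λ_min(Q(t)) denote the smallest eigenvalue of Q(t). Then q is continuous, (π/ω)-periodic, nonnegative, and not identically zero on [0, π/ω]; consequently μ = ∫₀^{π/ω} q(s) ds > 0. -/

import Mathlib

open Real Matrix

lemma spec_sym2 (a b d : ℝ) :
    spectrum ℝ (!![a, b; b, d]) =
      {(a + d - Real.sqrt ((a - d)^2 + 4*b^2))/2, (a + d + Real.sqrt ((a - d)^2 + 4*b^2))/2} := by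
  have hnn : (0:ℝ) ≤ (a - d)^2 + 4*b^2 := by positivity
  have hsq : Real.sqrt ((a - d)^2 + 4*b^2) ^ 2 = (a - d)^2 + 4*b^2 := Real.sq_sqrt hnn
  ext x
  rw [spectrum.mem_iff, Matrix.isUnit_iff_isUnit_det, isUnit_iff_ne_zero, not_not]
  have : (algebraMap ℝ (Matrix (Fin 2) (Fin 2) ℝ) x - !![a, b; b, d]).det
      = (x - (a + d - Real.sqrt ((a - d)^2 + 4*b^2))/2) *
        (x - (a + d + Real.sqrt ((a - d)^2 + 4*b^2))/2) := by
    rw [Matrix.algebraMap_eq_diagonal, Matrix.det_fin_two]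
    simp [Matrix.diagonal_apply, Pi.algebraMap_apply]
    linear_combination ((1:ℝ)/4) * hsq
  rw [this, mul_eq_zero, Set.mem_insert_iff, Set.mem_singleton_iff, sub_eq_zero, sub_eq_zero]

lemma sInf_spec_sym2 (a b d : ℝ) :
    sInf (spectrum ℝ (!![a, b; b, d])) = (a + d - Real.sqrt ((a - d)^2 + 4*b^2))/2 := by
  rw [spec_sym2, csInf_pair, inf_eq_left]
  have : 0 ≤ Real.sqrt ((a - d)^2 + 4*b^2) := Real.sqrt_nonneg _
  linarith

lemma bracket_nonneg (p₁ ω δ E s c : ℝ) (hp : 0 < p₁) (hω : 0 < ω) (hδ : 0 < δ)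
    (hδE : 2*δ ≤ E - 1) (hE1 : 1 < E) (hrel : ω^2*E^2 = ω^2 + 4*p₁^2)
    (hsc : s^2 + c^2 = 1) :
    0 ≤ 4*p₁^2*E - δ*(2*p₁*s - ω*(1+E)*c)^2 := by
  have h1 : (2*p₁*s - ω*(1+E)*c)^2 ≤ 2*ω^2*E*(E+1) := by
    nlinarith [sq_nonneg (2*p₁*c + ω*(1+E)*s), hsc, hrel]
  nlinarith [mul_le_mul_of_nonneg_left h1 hδ.le, sq_nonneg (2*p₁*s - ω*(1+E)*c),
    mul_pos hω hω, mul_pos hp hp]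

lemma d_pos (p₁ ω δ E s c : ℝ) (hp : 0 < p₁) (hω : 0 < ω) (hδ : 0 < δ)
    (hδE : 2*δ ≤ E - 1) (hE1 : 1 < E) (hrel : ω^2*E^2 = ω^2 + 4*p₁^2)
    (hsc : s^2 + c^2 = 1) :
    0 < p₁*E + 2*(1+E)*δ*ω*s*c := by
  have hE0 : 0 < E := by linarith
  have hωE : 2*p₁ < ω*E := by
    nlinarith [mul_pos hω hE0, mul_pos hω hp]
  have hsc2 : -(1:ℝ)/2 ≤ s*c := by nlinarith [sq_nonneg (s+c)]
  have hk : (0:ℝ) ≤ 2*(1+E)*δ*ω := by positivity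
  have h4 : 2*(1+E)*δ*ω * (-(1:ℝ)/2) ≤ 2*(1+E)*δ*ω * (s*c) :=
    mul_le_mul_of_nonneg_left hsc2 hk
  have h5 : (1+E)*δ*ω*ω ≤ 2*p₁^2 := by nlinarith [mul_pos hω hω]
  nlinarith [mul_pos hp (sub_pos.mpr hωE), mul_pos hω hp]

lemma bracket0_pos (p₁ ω δ E : ℝ) (hp : 0 < p₁) (hω : 0 < ω) (hδ : 0 < δ)
    (hδE : 2*δ ≤ E - 1) (hE1 : 1 < E) (hrel : ω^2*E^2 = ω^2 + 4*p₁^2) :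
    0 < 4*p₁^2*E - δ*(ω*(1+E))^2 := by
  have c1 : δ*(ω*(1+E))^2 ≤ (E-1)/2*(ω^2*(1+E)^2) := by
    nlinarith [mul_nonneg (by linarith : (0:ℝ) ≤ E - 1 - 2*δ)
      (by positivity : (0:ℝ) ≤ ω^2*(1+E)^2)]
  have c2 : (E-1)/2*(ω^2*(1+E)^2) = 2*p₁^2*(1+E) := by
    linear_combination ((1+E)/2)*hrel
  nlinarith [mul_pos (mul_pos hp hp) (sub_pos.mpr hE1)]

set_option maxHeartbeats 2000000 in
theorem lambda_min_Q_properties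
    (p₁ ω δ : ℝ) (hp₁ : 0 < p₁) (hω : 0 < ω)
    (ηd δd : ℝ)
    (hηd : ηd = (1 / p₁ ^ 2) * (1 + Real.sqrt (1 + 4 * p₁ ^ 2 / ω ^ 2)))
    (hδd : δd = (Real.sqrt (ω ^ 2 + 4 * p₁ ^ 2) - ω) / (2 * ω))
    (hδ : 0 < δ) (hδ' : δ ≤ δd)
    (A : ℝ → Matrix (Fin 2) (Fin 2) ℝ)
    (hA : ∀ t : ℝ, A t =
      !![0, 1; -δ * ω ^ 2 * (cos (ω * t)) ^ 2, -p₁ - δ * ω * sin (2 * ω * t)])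
    (P : Matrix (Fin 2) (Fin 2) ℝ) (hP : P = !![1, 1 / p₁; 1 / p₁, ηd])
    (Q : ℝ → Matrix (Fin 2) (Fin 2) ℝ)
    (hQ : ∀ t : ℝ, Q t = -((1 : ℝ) / 2) • (P * A t + (A t)ᵀ * P))
    (q : ℝ → ℝ)
    (hq : ∀ t : ℝ, q t = sInf (spectrum ℝ (Q t))) :
    Continuous q ∧ Function.Periodic q (π / ω) ∧ (∀ t : ℝ, 0 ≤ q t) ∧
      (∃ t ∈ Set.Icc (0 : ℝ) (π / ω), q t ≠ 0) ∧
      0 < ∫ s in (0 : ℝ)..(π / ω), q s := by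
  have hω' : ω ≠ 0 := ne_of_gt hω
  have hp' : p₁ ≠ 0 := ne_of_gt hp₁
  obtain ⟨E, hE⟩ : ∃ x : ℝ, x = Real.sqrt (1 + 4 * p₁ ^ 2 / ω ^ 2) := ⟨_, rfl⟩
  rw [← hE] at hηd
  have hE2 : E ^ 2 = 1 + 4 * p₁ ^ 2 / ω ^ 2 := by rw [hE]; exact Real.sq_sqrt (by positivity)
  have hEnn : 0 ≤ E := hE ▸ Real.sqrt_nonneg _
  have hE1 : 1 < E := by
    have h1 : 0 < 4 * p₁ ^ 2 / ω ^ 2 := by positivity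
    nlinarith [hE2, hEnn, h1]
  have hE0 : 0 < E := by linarith
  have hrel : ω ^ 2 * E ^ 2 = ω ^ 2 + 4 * p₁ ^ 2 := by
    rw [hE2]; field_simp
  have hδE : 2 * δ ≤ E - 1 := by
    have hsq : Real.sqrt (ω ^ 2 + 4 * p₁ ^ 2) = ω * E := by
      rw [hE, ← Real.sqrt_sq hω.le, ← Real.sqrt_mul (by positivity)]
      congr 1
      field_simp
      exact Real.sq_sqrt (sq_nonneg ω)
    rw [hδd, hsq, le_div_iff₀ (by positivity)] at hδ'
    nlinarith
  obtain ⟨a, ha⟩ : ∃ g : ℝ → ℝ, g = fun t => δ * ω ^ 2 * (cos (ω * t)) ^ 2 / p₁ := ⟨_, rfl⟩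
  obtain ⟨b, hb⟩ : ∃ g : ℝ → ℝ, g = fun t => δ * ω / (2 * p₁) * sin (2 * ω * t) + ηd * δ * ω ^ 2 / 2 * (cos (ω * t)) ^ 2 := ⟨_, rfl⟩
  obtain ⟨d, hd⟩ : ∃ g : ℝ → ℝ, g = fun t => ηd * p₁ - 1 / p₁ + ηd * δ * ω * sin (2 * ω * t) := ⟨_, rfl⟩
  have hQ' : ∀ t, Q t = !![a t, b t; b t, d t] := by
    intro t
    rw [hQ, hA, hP]
    ext i j
    simp only [ha, hb, hd]
    fin_cases i <;> fin_cases j <;>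
      simp [Matrix.mul_apply, Fin.sum_univ_two, Matrix.transpose_apply,
        Matrix.vecHead, Matrix.vecTail] <;> field_simp <;> ring
  have hqf : ∀ t, q t =
      (a t + d t - Real.sqrt ((a t - d t)^2 + 4*(b t)^2))/2 := by
    intro t; rw [hq, hQ', sInf_spec_sym2]
  have hsin2 : ∀ t : ℝ, sin (2 * ω * t) = 2 * sin (ω * t) * cos (ω * t) := by
    intro t
    rw [show 2 * ω * t = 2 * (ω * t) by ring, Real.sin_two_mul]
  have hdpos : ∀ t, 0 < d t := by
    intro t
    have expand : d t = (p₁ * E + 2 * (1 + E) * δ * ω * sin (ω * t) * cos (ω * t)) / p₁ ^ 2 := by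
      simp only [hd]
      rw [hsin2 t, hηd]
      field_simp
      ring
    rw [expand]
    exact div_pos (d_pos p₁ ω δ E (sin (ω * t)) (cos (ω * t)) hp₁ hω hδ hδE hE1 hrel
      (Real.sin_sq_add_cos_sq _)) (by positivity)
  have hkey : ∀ t, a t * d t - (b t) ^ 2
        = (δ * ω ^ 2 * (cos (ω * t)) ^ 2 / (4 * p₁ ^ 4)) *
          (4 * p₁ ^ 2 * E - δ * (2 * p₁ * sin (ω * t) - ω * (1 + E) * cos (ω * t)) ^ 2) := by
    intro t
    simp only [ha, hb, hd]
    rw [hsin2 t, hηd]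
    field_simp
    ring
  have hDet : ∀ t, 0 ≤ a t * d t - (b t) ^ 2 := by
    intro t
    rw [hkey]
    exact mul_nonneg (by positivity)
      (bracket_nonneg p₁ ω δ E (sin (ω * t)) (cos (ω * t)) hp₁ hω hδ hδE hE1 hrel
        (Real.sin_sq_add_cos_sq _))
  have hann : ∀ t, 0 ≤ a t := by
    intro t; simp only [ha]; positivity
  have hqnn : ∀ t, 0 ≤ q t := by
    intro t
    rw [hqf]
    have hT : 0 ≤ a t + d t := by linarith [hdpos t, hann t]
    apply div_nonneg _ (by norm_num)
    rw [sub_nonneg]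
    exact le_trans (Real.sqrt_le_sqrt (by nlinarith [hDet t]))
      (le_of_eq (Real.sqrt_sq hT))
  have hq0 : 0 < q 0 := by
    rw [hqf]
    have hDet0 : 0 < a 0 * d 0 - (b 0) ^ 2 := by
      rw [hkey 0]
      have h1 : Real.cos (ω * 0) = 1 := by rw [mul_zero, Real.cos_zero]
      have h2 : Real.sin (ω * 0) = 0 := by rw [mul_zero, Real.sin_zero]
      rw [h1, h2]
      have h3 : (2 * p₁ * 0 - ω * (1 + E) * 1) ^ 2 = (ω * (1 + E)) ^ 2 := by ring
      rw [h3]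
      exact mul_pos (by positivity) (bracket0_pos p₁ ω δ E hp₁ hω hδ hδE hE1 hrel)
    have hT : 0 < a 0 + d 0 := by linarith [hdpos 0, hann 0]
    have harg : (a 0 - d 0)^2 + 4 * (b 0)^2 < (a 0 + d 0)^2 := by nlinarith [hDet0]
    have h5 := Real.sqrt_lt_sqrt (by positivity : (0:ℝ) ≤ (a 0 - d 0)^2 + 4*(b 0)^2) harg
    rw [Real.sqrt_sq hT.le] at h5
    apply div_pos _ (by norm_num)
    rw [sub_pos]
    exact h5
  have hca : Continuous a := by rw [ha]; fun_prop
  have hcb : Continuous b := by rw [hb]; fun_prop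
  have hcd : Continuous d := by rw [hd]; fun_prop
  have hcont : Continuous q := by
    have hqf' : q = fun t => (a t + d t - Real.sqrt ((a t - d t)^2 + 4*(b t)^2))/2 :=
      funext hqf
    rw [hqf']
    exact ((hca.add hcd).sub (Real.continuous_sqrt.comp
      ((((hca.sub hcd).pow 2).add (continuous_const.mul (hcb.pow 2)))))).div_const 2
  have hper : Function.Periodic q (π / ω) := by
    intro t
    have hcos : cos (ω * (t + π / ω)) ^ 2 = cos (ω * t) ^ 2 := by
      rw [show ω * (t + π / ω) = ω * t + π by field_simp, Real.cos_add_pi]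
      ring
    have hsin : sin (2 * ω * (t + π / ω)) = sin (2 * ω * t) := by
      rw [show 2 * ω * (t + π / ω) = 2 * ω * t + 2 * π by field_simp]
      exact Real.sin_add_two_pi _
    simp only [hq, hQ, hA, hcos, hsin]
  have hL : 0 < π / ω := by positivity
  refine ⟨hcont, hper, hqnn, ⟨0, ⟨le_refl 0, hL.le⟩, ne_of_gt hq0⟩, ?_⟩
  have hopen : IsOpen {x : ℝ | 0 < q x} := isOpen_lt continuous_const hcont
  obtain ⟨ε, hε, hball⟩ := Metric.isOpen_iff.mp hopen 0 hq0
  obtain ⟨ε', hε'⟩ : ∃ x : ℝ, x = min (ε/2) (π / ω) := ⟨_, rfl⟩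
  have hε'0 : 0 < ε' := hε' ▸ lt_min (by linarith) hL
  have hε'L : ε' ≤ π / ω := hε' ▸ min_le_right _ _
  have hpos : ∀ x ∈ Set.Ioo (0:ℝ) ε', 0 < q x := by
    intro x hx
    apply hball
    rw [Metric.mem_ball, Real.dist_eq, sub_zero, abs_of_pos hx.1]
    have h1 : x < ε/2 := lt_of_lt_of_le hx.2 (hε' ▸ min_le_left _ _)
    linarith
  have hint1 : IntervalIntegrable q MeasureTheory.volume 0 ε' := hcont.intervalIntegrable _ _
  have hint2 : IntervalIntegrable q MeasureTheory.volume ε' (π / ω) := hcont.intervalIntegrable _ _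
  have hsplit : ∫ s in (0:ℝ)..(π/ω), q s = (∫ s in (0:ℝ)..ε', q s) + ∫ s in ε'..(π/ω), q s :=
    (intervalIntegral.integral_add_adjacent_intervals hint1 hint2).symm
  rw [hsplit]
  have h1 : 0 < ∫ s in (0:ℝ)..ε', q s :=
    intervalIntegral.intervalIntegral_pos_of_pos_on hint1 hpos hε'0
  have h2 : 0 ≤ ∫ s in ε'..(π/ω), q s :=
    intervalIntegral.integral_nonneg hε'L (fun x _ => hqnn x)
  linarith
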